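/- arXiv:1110.2284 — 2 statements merged into one kernel-verified Lean document; each statement's English description precedes it below -/
import Mathlib

section
/- Let k be a field, C a k-coalgebra and C* its dual convolution algebra. Then every left ideal of C* is closed (i.e. every left ideal I satisfies I = (I^⊥)^⊥) if and only if C* is left Noetherian. -/
open TensorProduct Coalgebra

noncomputable section

namespace Paper

variable {k : Type*} [Field k] {C : Type*} [AddCommGroup C] [Module k C] [Coalgebra k C]

/-- The convolution product on the dual of a coalgebra. -/
def conv (f g : Module.Dual k C) : Module.Dual k C :=
  LinearMap.mul' k k ∘ₗ TensorProduct.map f g ∘ₗ comul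

lemma conv_apply (f g : Module.Dual k C) (c : C) :
    conv f g c = LinearMap.mul' k k (TensorProduct.map f g (comul c)) := rfl

private lemma conv_assoc (f g h : Module.Dual k C) : conv (conv f g) h = conv f (conv g h) := by
  have h1 : (LinearMap.mul' k k ∘ₗ TensorProduct.map (conv f g) h : C ⊗[k] C →ₗ[k] k)
      = (LinearMap.mul' k k ∘ₗ TensorProduct.map
          (LinearMap.mul' k k ∘ₗ TensorProduct.map f g) h)
        ∘ₗ (comul (R := k) (A := C)).rTensor C := by
    ext x y
    simp [conv_apply]
  have h2 : (LinearMap.mul' k k ∘ₗ TensorProduct.map f (conv g h) : C ⊗[k] C →ₗ[k] k)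
      = (LinearMap.mul' k k ∘ₗ TensorProduct.map f
          (LinearMap.mul' k k ∘ₗ TensorProduct.map g h))
        ∘ₗ (comul (R := k) (A := C)).lTensor C := by
    ext x y
    simp [conv_apply]
  have h3 : (LinearMap.mul' k k ∘ₗ TensorProduct.map f
          (LinearMap.mul' k k ∘ₗ TensorProduct.map g h))
        ∘ₗ (TensorProduct.assoc k C C C).toLinearMap
      = LinearMap.mul' k k ∘ₗ TensorProduct.map
          (LinearMap.mul' k k ∘ₗ TensorProduct.map f g) h := by
    apply TensorProduct.ext_threefold
    intro x y z
    simp [mul_assoc]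
  ext c
  have e1 : conv (conv f g) h c
      = (LinearMap.mul' k k ∘ₗ TensorProduct.map (conv f g) h) (comul c) := rfl
  have e2 : conv f (conv g h) c
      = (LinearMap.mul' k k ∘ₗ TensorProduct.map f (conv g h)) (comul c) := rfl
  rw [e1, e2, h1, h2]
  simp only [LinearMap.comp_apply]
  rw [← Coalgebra.coassoc_apply (R := k) c]
  exact (LinearMap.congr_fun h3 ((comul (R := k) (A := C)).rTensor C (comul c))).symm

private lemma counit_conv (f : Module.Dual k C) : conv counit f = f := by
  have h1 : (TensorProduct.map (counit (R := k) (A := C)) f : C ⊗[k] C →ₗ[k] k ⊗[k] k)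
      = f.lTensor k ∘ₗ (counit (R := k) (A := C)).rTensor C := by
    ext x y
    simp
  ext c
  rw [conv_apply, h1, LinearMap.comp_apply, Coalgebra.rTensor_counit_comul,
    LinearMap.lTensor_tmul, LinearMap.mul'_apply, one_mul]

private lemma conv_counit (f : Module.Dual k C) : conv f counit = f := by
  have h1 : (TensorProduct.map f (counit (R := k) (A := C)) : C ⊗[k] C →ₗ[k] k ⊗[k] k)
      = f.rTensor k ∘ₗ (counit (R := k) (A := C)).lTensor C := by
    ext x y
    simp
  ext c
  rw [conv_apply, h1, LinearMap.comp_apply, Coalgebra.lTensor_counit_comul,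
    LinearMap.rTensor_tmul, LinearMap.mul'_apply, mul_one]

private lemma conv_add (f g h : Module.Dual k C) : conv f (g + h) = conv f g + conv f h := by
  ext c
  simp only [conv_apply, TensorProduct.map_add_right, LinearMap.add_apply, map_add]

private lemma add_conv (f g h : Module.Dual k C) : conv (f + g) h = conv f h + conv g h := by
  ext c
  simp only [conv_apply, TensorProduct.map_add_left, LinearMap.add_apply, map_add]

private lemma zero_conv (f : Module.Dual k C) : conv 0 f = 0 := by
  ext c
  have : TensorProduct.map (0 : Module.Dual k C) f = 0 := by
    ext x y; simp
  simp [conv_apply, this]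

private lemma conv_zero (f : Module.Dual k C) : conv f 0 = 0 := by
  ext c
  have : TensorProduct.map f (0 : Module.Dual k C) = 0 := by
    ext x y; simp
  simp [conv_apply, this]

/-- The convolution algebra structure on the dual of a coalgebra. -/
instance instRingDual : Ring (Module.Dual k C) where
  __ := (inferInstance : AddCommGroup (Module.Dual k C))
  mul := conv
  one := counit
  mul_assoc := conv_assoc
  one_mul := counit_conv
  mul_one := conv_counit
  left_distrib := conv_add
  right_distrib := add_conv
  zero_mul := zero_conv
  mul_zero := conv_zero

lemma dual_mul_def (f g : Module.Dual k C) : f * g = conv f g := rfl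

lemma dual_mul_apply (f g : Module.Dual k C) (c : C) :
    (f * g) c = LinearMap.mul' k k (TensorProduct.map f g (comul c)) := rfl

lemma dual_one_def : (1 : Module.Dual k C) = counit := rfl

variable {k : Type*} [Field k] {C : Type*} [AddCommGroup C] [Module k C] [Coalgebra k C]

instance : IsScalarTower k (Module.Dual k C) (Module.Dual k C) :=
  ⟨fun a f g => by
    show conv (a • f) g = a • conv f g
    ext c
    simp [conv_apply, TensorProduct.map_smul_left]⟩

/-- For a subset `X ⊆ C`, its orthogonal `X^⊥ ⊆ C*`. -/
def perpC (X : Set C) : Set (Module.Dual k C) := {f | ∀ x ∈ X, f x = 0}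

/-- For a subset `Y ⊆ C*`, its orthogonal `Y^⊥ ⊆ C`. -/
def perpD (Y : Set (Module.Dual k C)) : Set C := {c | ∀ f ∈ Y, f c = 0}

/-- For `h ∈ C*`, the map `c ↦ ∑ c₁ h(c₂)`; this is the canonical left action of `C*` on `C`. -/
def wedge (h : Module.Dual k C) : C →ₗ[k] C :=
  (TensorProduct.rid k C).toLinearMap ∘ₗ h.lTensor C ∘ₗ comul

variable (k C) in
/-- A left `C*`-module `M` is rational if every element `m` admits finitely many
`mᵢ ∈ M`, `cᵢ ∈ C` with `f • m = ∑ᵢ f(cᵢ) • mᵢ` for all `f ∈ C*` (the scalar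
`f (cs i) ∈ k` acting through the `k`-multiple `f (cs i) • 1` of the identity of `C*`). -/
def IsRationalLeft (M : Type*) [AddCommGroup M] [Module (Module.Dual k C) M] : Prop :=
  ∀ m : M, ∃ (n : ℕ) (ms : Fin n → M) (cs : Fin n → C),
    ∀ f : Module.Dual k C, f • m = ∑ i, (f (cs i) • (1 : Module.Dual k C)) • ms i

variable (k C) in
/-- A right `C*`-module (i.e. a left module over the opposite ring) `M` is rational if every
element `m` admits finitely many `mᵢ ∈ M`, `cᵢ ∈ C` with `m • f = ∑ᵢ f(cᵢ) • mᵢ` for all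
`f ∈ C*`. -/
def IsRationalRight (M : Type*) [AddCommGroup M] [Module (Module.Dual k C)ᵐᵒᵖ M] : Prop :=
  ∀ m : M, ∃ (n : ℕ) (ms : Fin n → M) (cs : Fin n → C),
    ∀ f : Module.Dual k C,
      (MulOpposite.op f) • m
        = ∑ i, (MulOpposite.op (f (cs i) • (1 : Module.Dual k C))) • ms i

/-- A ring `R` is a left D-ring if every left ideal is a left annihilator. -/
def IsLeftDRing (R : Type*) [Ring R] : Prop :=
  ∀ I : Ideal R, ∃ H : Set R, (I : Set R) = {r : R | ∀ h ∈ H, r * h = 0}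
/-! ### Auxiliary lemmas for Statement 3 -/

lemma mul_wedge (g f : Module.Dual k C) (c : C) : (g * f) c = g (wedge f c) := by
  have h : (LinearMap.mul' k k ∘ₗ TensorProduct.map g f : C ⊗[k] C →ₗ[k] k)
      = g ∘ₗ (TensorProduct.rid k C).toLinearMap ∘ₗ f.lTensor C := by
    ext x y
    simp [mul_comm]
  rw [dual_mul_apply]
  have := LinearMap.congr_fun h (comul (R := k) c)
  simpa [wedge] using this

/-- `perpD` of a set of functionals, as a `k`-submodule of `C`. -/
def perpDSub (Y : Set (Module.Dual k C)) : Submodule k C where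
  carrier := perpD Y
  add_mem' := fun {a b} ha hb f hf => by
    rw [map_add, ha f hf, hb f hf, add_zero]
  zero_mem' := fun f _ => map_zero f
  smul_mem' := fun r {a} ha f hf => by
    rw [map_smul, ha f hf, smul_zero]

lemma mem_perpDSub {Y : Set (Module.Dual k C)} {c : C} :
    c ∈ perpDSub Y ↔ ∀ f ∈ Y, f c = 0 := Iff.rfl

lemma subset_biperp (Y : Set (Module.Dual k C)) : Y ⊆ perpC (perpD Y) :=
  fun f hf _c hc => hc f hf

/-- Every finitely generated left ideal of `C*` is closed. -/
lemma fg_closed (J : Ideal (Module.Dual k C)) (hfg : J.FG) :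
    (J : Set (Module.Dual k C)) = perpC (perpD (J : Set (Module.Dual k C))) := by
  classical
  refine Set.Subset.antisymm (subset_biperp _) ?_
  obtain ⟨S, hS⟩ := hfg
  set W : C →ₗ[k] (S → C) := LinearMap.pi (fun s => wedge (s : Module.Dual k C)) with hW
  have hker : ∀ c : C, W c = 0 ↔ c ∈ perpD (J : Set (Module.Dual k C)) := by
    intro c
    constructor
    · intro h0 f hf
      rw [← hS] at hf
      obtain ⟨l, -, hl⟩ := Submodule.mem_span_finset.mp hf
      rw [← hl, LinearMap.coe_sum, Finset.sum_apply]
      refine Finset.sum_eq_zero (fun m hm => ?_)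
      have : wedge m c = 0 := by
        have := congr_fun h0 ⟨m, hm⟩
        simpa [hW, LinearMap.pi_apply] using this
      rw [smul_eq_mul, mul_wedge, this, map_zero]
    · intro hc
      funext s
      have hsJ : (s : Module.Dual k C) ∈ J := by
        rw [← hS]; exact Submodule.subset_span s.2
      rw [Pi.zero_apply]
      rw [← Module.forall_dual_apply_eq_zero_iff k]
      intro g
      have : (g * (s : Module.Dual k C)) c = 0 := hc _ (J.mul_mem_left g hsJ)
      rw [mul_wedge] at this
      simpa [hW, LinearMap.pi_apply] using this
  intro f' hf'
  have hkerle : LinearMap.ker W ≤ LinearMap.ker f' := by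
    intro c hc
    exact LinearMap.mem_ker.mpr (hf' c ((hker c).mp (LinearMap.mem_ker.mp hc)))
  -- factor f' through W
  set fbar : (C ⧸ LinearMap.ker W) →ₗ[k] k := (LinearMap.ker W).liftQ f' hkerle with hfbar
  set e := W.quotKerEquivRange with he
  obtain ⟨φ, hφ⟩ := LinearMap.exists_extend (fbar ∘ₗ e.symm.toLinearMap)
  have hfactor : ∀ c : C, f' c = φ (W c) := by
    intro c
    have h1 : φ (W c) = (fbar ∘ₗ e.symm.toLinearMap) ⟨W c, LinearMap.mem_range_self W c⟩ := by
      rw [← hφ]; rfl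
    rw [h1]
    have h2 : e.symm ⟨W c, LinearMap.mem_range_self W c⟩
        = Submodule.Quotient.mk c := by
      rw [LinearEquiv.symm_apply_eq]
      rfl
    simp only [LinearMap.comp_apply, LinearEquiv.coe_coe, h2]
    simp [hfbar, Submodule.liftQ_apply]
  have hsum : f' = ∑ s : S, (φ ∘ₗ LinearMap.single k (fun _ : S => C) s) * (s : Module.Dual k C) := by
    ext c
    rw [hfactor c]
    have : W c = ∑ s : S, Pi.single s (W c s) := (Finset.univ_sum_single (W c)).symm
    rw [this, map_sum, LinearMap.coe_sum, Finset.sum_apply]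
    refine Finset.sum_congr rfl (fun s _ => ?_)
    rw [mul_wedge]
    simp [hW, LinearMap.pi_apply, LinearMap.single_apply]
  rw [hsum]
  exact Ideal.sum_mem J (fun s _ => J.mul_mem_left _ (by rw [← hS]; exact Submodule.subset_span s.2))

/-- Every left ideal of `C*` is closed in the finite topology iff `C*`
is left Noetherian. -/
theorem statement3 {k : Type*} [Field k] {C : Type*} [AddCommGroup C] [Module k C]
    [Coalgebra k C] :
    (∀ I : Ideal (Module.Dual k C),
        (I : Set (Module.Dual k C)) = perpC (perpD (I : Set (Module.Dual k C)))) ↔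
      IsNoetherian (Module.Dual k C) (Module.Dual k C) := by
  classical
  constructor
  · intro hclosed
    rw [isNoetherian_def]
    by_contra hnf
    push_neg at hnf
    obtain ⟨I, hI⟩ := hnf
    have key : ∀ J : Ideal (Module.Dual k C), J.FG → J ≤ I → ∃ x, x ∈ I ∧ x ∉ J := by
      intro J hfg hle
      by_contra hc
      push_neg at hc
      exact hI (le_antisymm hle (fun x hx => hc x hx) ▸ hfg)
    let T := {J : Ideal (Module.Dual k C) // J.FG ∧ J ≤ I}
    let g : T → T := fun J =>
      ⟨J.1 ⊔ Ideal.span {(key J.1 J.2.1 J.2.2).choose},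
        ⟨Submodule.FG.sup J.2.1 (Submodule.fg_span_singleton _),
         sup_le J.2.2 ((Submodule.span_le).mpr
           (Set.singleton_subset_iff.mpr (key J.1 J.2.1 J.2.2).choose_spec.1))⟩⟩
    let seq : ℕ → T := fun n => g^[n] ⟨⊥, Submodule.fg_bot, bot_le⟩
    let Jc : ℕ → Ideal (Module.Dual k C) := fun n => (seq n).1
    have hsucc : ∀ n, seq (n+1) = g (seq n) := fun n => Function.iterate_succ_apply' g n _
    have hsucc' : ∀ n, Jc (n+1) = (g (seq n)).1 := fun n => congrArg Subtype.val (hsucc n)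
    have hstep : ∀ n, ∃ x, x ∈ Jc (n+1) ∧ x ∉ Jc n := by
      intro n
      refine ⟨(key (Jc n) (seq n).2.1 (seq n).2.2).choose, ?_,
        (key (Jc n) (seq n).2.1 (seq n).2.2).choose_spec.2⟩
      rw [hsucc' n]
      exact Submodule.mem_sup_right (Submodule.subset_span rfl)
    have hmono : ∀ n, Jc n ≤ Jc (n+1) := by
      intro n
      rw [hsucc' n]
      exact le_sup_left
    have hfgJ : ∀ n, (Jc n).FG := fun n => (seq n).2.1
    let D : ℕ → Submodule k C := fun n => perpDSub (Jc n : Set (Module.Dual k C))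
    have hDanti : ∀ n, D (n+1) ≤ D n := fun n c hc f hf => hc f (hmono n hf)
    have hDanti' : Antitone D := antitone_nat_of_succ_le hDanti
    have hDstep : ∀ n, ∃ c, c ∈ D n ∧ c ∉ D (n+1) := by
      intro n
      by_contra hcon
      push_neg at hcon
      have hEq : perpD (Jc n : Set (Module.Dual k C))
          = perpD (Jc (n+1) : Set (Module.Dual k C)) :=
        Set.Subset.antisymm (fun x hx => hcon x hx) (fun x hx => hDanti n hx)
      have h1 : (Jc n : Set (Module.Dual k C)) = (Jc (n+1) : Set (Module.Dual k C)) := by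
        rw [fg_closed _ (hfgJ n), fg_closed _ (hfgJ (n+1)), hEq]
      obtain ⟨x, hx1, hx2⟩ := hstep n
      have hx1' : x ∈ (Jc (n+1) : Set (Module.Dual k C)) := hx1
      rw [← h1] at hx1'
      exact hx2 hx1'
    let c : ℕ → C := fun n => (hDstep n).choose
    have hc1 : ∀ n, c n ∈ D n := fun n => (hDstep n).choose_spec.1
    have hc2 : ∀ n, c n ∉ D (n+1) := fun n => (hDstep n).choose_spec.2
    let Jsup : Ideal (Module.Dual k C) := ⨆ n, Jc n
    let Dsup : Submodule k C := perpDSub (Jsup : Set (Module.Dual k C))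
    have hDsup : ∀ n, Dsup ≤ D n := fun n x hx f hf => hx f (le_iSup Jc n hf)
    let v : ℕ → C ⧸ Dsup := fun n => Dsup.mkQ (c n)
    have hli : LinearIndependent k v := by
      rw [linearIndependent_iff']
      intro s gcoef hsum i hi
      by_contra hgi
      set t := s.filter (fun j => gcoef j ≠ 0) with ht
      have hti : i ∈ t := Finset.mem_filter.mpr ⟨hi, hgi⟩
      have htne : t.Nonempty := ⟨i, hti⟩
      set m := t.min' htne with hm
      have hmt : m ∈ t := t.min'_mem htne
      have hms : m ∈ s := (Finset.mem_filter.mp hmt).1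
      have hgm : gcoef m ≠ 0 := (Finset.mem_filter.mp hmt).2
      have hin : (∑ j ∈ s, gcoef j • c j) ∈ Dsup := by
        rw [← Submodule.Quotient.mk_eq_zero]
        have : Submodule.Quotient.mk (p := Dsup) (∑ j ∈ s, gcoef j • c j)
            = ∑ j ∈ s, gcoef j • v j := by
          rw [← Submodule.mkQ_apply, map_sum]
          simp only [map_smul]
          rfl
        rw [this, hsum]
      have hrest : (∑ j ∈ s.erase m, gcoef j • c j) ∈ D (m+1) := by
        refine Submodule.sum_mem _ (fun j hj => ?_)
        by_cases h0 : gcoef j = 0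
        · rw [h0, zero_smul]; exact Submodule.zero_mem _
        · have hjt : j ∈ t := Finset.mem_filter.mpr ⟨Finset.mem_of_mem_erase hj, h0⟩
          have hmj : m + 1 ≤ j :=
            lt_of_le_of_ne (t.min'_le j hjt) (Ne.symm (Finset.ne_of_mem_erase hj))
          exact Submodule.smul_mem _ _ (hDanti' hmj (hc1 j))
      have hsplit : gcoef m • c m
          = (∑ j ∈ s, gcoef j • c j) - ∑ j ∈ s.erase m, gcoef j • c j := by
        rw [← Finset.add_sum_erase s _ hms, add_sub_cancel_right]
      have hcm : gcoef m • c m ∈ D (m+1) :=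
        hsplit ▸ Submodule.sub_mem _ (hDsup (m+1) hin) hrest
      have hfin : c m ∈ D (m+1) := by
        have := Submodule.smul_mem _ (gcoef m)⁻¹ hcm
        rwa [inv_smul_smul₀ hgm] at this
      exact hc2 m hfin
    have hli' : LinearIndepOn k id (Set.range v) := (linearIndepOn_id_range_iff hli.injective).mpr hli
    let b := Module.Basis.extend hli'
    let g0 : (C ⧸ Dsup) →ₗ[k] k :=
      b.constr k (fun x => if (x : C ⧸ Dsup) ∈ Set.range v then (1:k) else 0)
    have hg0 : ∀ n, g0 (v n) = 1 := by
      intro n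
      have hmem : v n ∈ hli'.extend (Set.subset_univ _) :=
        hli'.subset_extend _ ⟨n, rfl⟩
      have hb : b ⟨v n, hmem⟩ = v n := Module.Basis.extend_apply_self hli' ⟨v n, hmem⟩
      have := Module.Basis.constr_basis b k
        (fun x => if (x : C ⧸ Dsup) ∈ Set.range v then (1:k) else 0) ⟨v n, hmem⟩
      rw [hb] at this
      rw [this, if_pos ⟨n, rfl⟩]
    let f : Module.Dual k C := g0 ∘ₗ Dsup.mkQ
    have hfperp : f ∈ perpC (perpD (Jsup : Set (Module.Dual k C))) := by
      intro x hx
      show g0 (Dsup.mkQ x) = 0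
      have : Dsup.mkQ x = 0 := (Submodule.Quotient.mk_eq_zero _).mpr hx
      rw [this, map_zero]
    have hfJ : f ∈ Jsup := by
      have h := hclosed Jsup
      rw [← h] at hfperp
      exact hfperp
    obtain ⟨n, hn⟩ :=
      (Submodule.mem_iSup_of_chain ⟨Jc, monotone_nat_of_le_succ hmono⟩ f).mp hfJ
    have hzero : f (c n) = 0 := hc1 n f hn
    have hone : f (c n) = 1 := hg0 n
    rw [hone] at hzero
    exact one_ne_zero hzero
  · intro hN I
    exact fg_closed I (IsNoetherian.noetherian I)

end Paper
end
end

section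
/- Let k be a field, C a k-coalgebra and C* its dual convolution algebra. If C* is a left D-ring, i.e. every left ideal of C* is of the form {f ∈ C* : f*h = 0 for all h ∈ H} for some subset H ⊆ C*, then C (equivalently C*) is finite dimensional over k. -/
open TensorProduct Coalgebra

noncomputable section

namespace Paper

variable {k : Type*} [Field k] {C : Type*} [AddCommGroup C] [Module k C] [Coalgebra k C]

variable {k : Type*} [Field k] {C : Type*} [AddCommGroup C] [Module k C] [Coalgebra k C]

section DRingProof

variable {k : Type*} [Field k] {C : Type*} [AddCommGroup C] [Module k C] [Coalgebra k C]

private lemma dual_sep_eq {x y : C} (h : ∀ f : Module.Dual k C, f x = f y) : x = y := by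
  have h0 : ∀ f : Module.Dual k C, f (x - y) = 0 := by
    intro f; rw [map_sub, h f, sub_self]
  exact sub_eq_zero.mp ((Module.forall_dual_apply_eq_zero_iff k (x - y)).1 h0)

set_option linter.unusedSectionVars false

private lemma mul_apply_eq_wedge (f h : Module.Dual k C) (c : C) :
    (f * h) c = f (wedge h c) := by
  rw [dual_mul_apply]
  have key : (LinearMap.mul' k k ∘ₗ TensorProduct.map f h : C ⊗[k] C →ₗ[k] k)
      = f ∘ₗ ((TensorProduct.rid k C).toLinearMap ∘ₗ h.lTensor C) := by
    apply TensorProduct.ext'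
    intro a b
    simp [LinearMap.mul'_apply, TensorProduct.rid_tmul, smul_eq_mul, mul_comm]
  have := LinearMap.congr_fun key (comul c)
  simpa [wedge] using this


private lemma wedge_add (f g : Module.Dual k C) : wedge (f + g) = wedge f + wedge g := by
  unfold wedge
  rw [LinearMap.lTensor_add]
  ext c
  simp

private lemma wedge_smul (a : k) (f : Module.Dual k C) : wedge (a • f) = a • wedge f := by
  unfold wedge
  rw [LinearMap.lTensor_smul]
  ext c
  simp

/-- `wedge` as a `k`-linear map. -/
noncomputable def wedgeL : Module.Dual k C →ₗ[k] (C →ₗ[k] C) where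
  toFun := wedge
  map_add' := wedge_add
  map_smul' := wedge_smul

private lemma wedge_mul (f g : Module.Dual k C) :
    wedge (f * g) = (wedge f) ∘ₗ (wedge g) := by
  ext c
  apply dual_sep_eq (k := k)
  intro φ
  rw [← mul_apply_eq_wedge]
  have h1 : (φ * (f * g)) c = ((φ * f) * g) c := by rw [mul_assoc]
  rw [h1, mul_apply_eq_wedge, mul_apply_eq_wedge]
  rfl

private lemma one_apply_wedge (h : Module.Dual k C) (c : C) :
    (1 : Module.Dual k C) (wedge h c) = h c := by
  rw [← mul_apply_eq_wedge, one_mul]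

/-- Application of a functional to the first tensor leg of `t`, as a linear map in the
functional. -/
noncomputable def coactT (t : C ⊗[k] C) : Module.Dual k C →ₗ[k] C where
  toFun f := (TensorProduct.lid k C) (f.rTensor C t)
  map_add' f g := by simp [LinearMap.rTensor_add]
  map_smul' a f := by simp [LinearMap.rTensor_smul]

private lemma pair_comm (g θ : Module.Dual k C) (c : C) :
    g (wedge θ c) = θ (coactT (comul c) g) := by
  have key : (g ∘ₗ ((TensorProduct.rid k C).toLinearMap ∘ₗ θ.lTensor C) : C ⊗[k] C →ₗ[k] k)
      = θ ∘ₗ ((TensorProduct.lid k C).toLinearMap ∘ₗ g.rTensor C) := by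
    apply TensorProduct.ext'
    intro a b
    simp [TensorProduct.rid_tmul, TensorProduct.lid_tmul, smul_eq_mul, mul_comm]
  have := LinearMap.congr_fun key (comul c)
  simpa [coactT, wedge] using this

private lemma coactT_fd (t : C ⊗[k] C) :
    FiniteDimensional k (LinearMap.range (coactT t)) := by
  induction t using TensorProduct.induction_on with
  | zero =>
      have : coactT (0 : C ⊗[k] C) = 0 := by ext f; simp [coactT]
      rw [this, LinearMap.range_zero]
      infer_instance
  | tmul a b =>
      have hle : LinearMap.range (coactT (a ⊗ₜ[k] b)) ≤ Submodule.span k {b} := by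
        rintro _ ⟨f, rfl⟩
        have : coactT (a ⊗ₜ[k] b) f = f a • b := by simp [coactT]
        rw [this]
        exact Submodule.smul_mem _ _ (Submodule.subset_span rfl)
      exact Submodule.finiteDimensional_of_le hle
  | add x y hx hy =>
      have hadd : coactT (x + y) = coactT x + coactT y := by
        ext f; simp [coactT]
      have hle : LinearMap.range (coactT (x + y)) ≤
          LinearMap.range (coactT x) ⊔ LinearMap.range (coactT y) := by
        rintro _ ⟨f, rfl⟩
        rw [hadd]
        exact Submodule.add_mem_sup (LinearMap.mem_range_self _ f) (LinearMap.mem_range_self _ f)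
      exact Submodule.finiteDimensional_of_le hle

private lemma exists_Npack (c : C) :
    ∃ N : Submodule k C, FiniteDimensional k N ∧ c ∈ N ∧
      ∀ θ : Module.Dual k C, (∀ n ∈ N, θ n = 0) → wedge θ c = 0 := by
  refine ⟨LinearMap.range (coactT (comul c)), coactT_fd _, ?_, ?_⟩
  · refine ⟨Coalgebra.counit, ?_⟩
    simp [coactT, Coalgebra.rTensor_counit_comul]
  · intro θ hθ
    apply dual_sep_eq (k := k)
    intro g
    rw [pair_comm, map_zero]
    exact hθ _ (LinearMap.mem_range_self _ g)

private lemma exists_dual_sep {M : Submodule k C} {x : C} (hx : x ∉ M) :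
    ∃ g : Module.Dual k C, (∀ m ∈ M, g m = 0) ∧ g x ≠ 0 := by
  have h0 : M.mkQ x ≠ 0 := by
    rw [Submodule.mkQ_apply]
    intro h
    exact hx ((Submodule.Quotient.mk_eq_zero M).1 h)
  have h1 : ¬ ∀ φ : Module.Dual k (C ⧸ M), φ (M.mkQ x) = 0 := by
    rw [Module.forall_dual_apply_eq_zero_iff]
    exact h0
  push_neg at h1
  obtain ⟨φ, hφ⟩ := h1
  refine ⟨φ.comp M.mkQ, fun m hm => ?_, hφ⟩
  have : M.mkQ m = 0 := by
    rw [Submodule.mkQ_apply]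
    exact (Submodule.Quotient.mk_eq_zero M).2 hm
  simp [this]

variable (k C) in
/-- The ideal of functionals whose wedge-action has finite rank. -/
noncomputable def Ifr : Ideal (Module.Dual k C) where
  carrier := {h | FiniteDimensional k (LinearMap.range (wedge h))}
  add_mem' := by
    intro a b ha hb
    haveI : FiniteDimensional k (LinearMap.range (wedge a)) := ha
    haveI : FiniteDimensional k (LinearMap.range (wedge b)) := hb
    have hle : LinearMap.range (wedge (a + b)) ≤
        LinearMap.range (wedge a) ⊔ LinearMap.range (wedge b) := by
      rintro _ ⟨x, rfl⟩
      rw [wedge_add]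
      exact Submodule.add_mem_sup (LinearMap.mem_range_self _ x) (LinearMap.mem_range_self _ x)
    exact Submodule.finiteDimensional_of_le hle
  zero_mem' := by
    have : wedge (0 : Module.Dual k C) = 0 := by
      have := wedge_smul (0 : k) (0 : Module.Dual k C)
      simpa using this
    show FiniteDimensional k (LinearMap.range (wedge (0 : Module.Dual k C)))
    rw [this, LinearMap.range_zero]
    infer_instance
  smul_mem' := by
    intro r x hx
    haveI : FiniteDimensional k (LinearMap.range (wedge x)) := hx
    show FiniteDimensional k (LinearMap.range (wedge (r • x)))
    rw [smul_eq_mul, wedge_mul, LinearMap.range_comp]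
    infer_instance

variable (k C) in
/-- The common kernel of all finite-rank functionals. -/
noncomputable def P0 : Submodule k C where
  carrier := {c | ∀ h : Module.Dual k C, h ∈ Ifr k C → h c = 0}
  add_mem' := by
    intro a b ha hb h hh
    rw [map_add, ha h hh, hb h hh, add_zero]
  zero_mem' := by intro h _; exact map_zero h
  smul_mem' := by
    intro a c hc h hh
    rw [map_smul, hc h hh, smul_zero]

private lemma Ifr_kills_P0 {h : Module.Dual k C} (hh : h ∈ Ifr k C) :
    ∀ p ∈ P0 k C, h p = 0 := fun _ hp => hp h hh

/-- Under the D-ring hypothesis, every functional killing `P0` has finite rank. -/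
private lemma mem_Ifr_of_kills_P0 (hD : IsLeftDRing (Module.Dual k C))
    {f : Module.Dual k C} (hf : ∀ p ∈ P0 k C, f p = 0) : f ∈ Ifr k C := by
  obtain ⟨H, hH⟩ := hD (Ifr k C)
  have hset : ∀ r : Module.Dual k C, r ∈ Ifr k C ↔ ∀ h ∈ H, r * h = 0 := by
    intro r
    constructor
    · intro hr h hh
      have : r ∈ (Ifr k C : Set (Module.Dual k C)) := hr
      rw [hH] at this
      exact this h hh
    · intro hr
      have : r ∈ {r : Module.Dual k C | ∀ h ∈ H, r * h = 0} := hr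
      rw [← hH] at this
      exact this
  have hrange : ∀ h ∈ H, ∀ x : C, wedge h x ∈ P0 k C := by
    intro h hh x g hg
    have h0 : g * h = 0 := (hset g).1 hg h hh
    have := mul_apply_eq_wedge g h x
    rw [h0] at this
    simpa using this.symm
  refine (hset f).2 ?_
  intro h hh
  ext x
  rw [mul_apply_eq_wedge]
  simpa using hf _ (hrange h hh x)

variable (k C) in
noncomputable def covSup : Submodule k C :=
  ⨆ (h : Module.Dual k C) (_ : h ∈ Ifr k C), LinearMap.range (wedge h)

private lemma mem_covSup (hD : IsLeftDRing (Module.Dual k C)) (c : C) :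
    c ∈ covSup k C := by
  obtain ⟨N, hNfd, hcN, hNkill⟩ := exists_Npack (k := k) c
  -- the annihilator ideal of c
  let A : Ideal (Module.Dual k C) :=
    { carrier := {f | wedge f c = 0}
      add_mem' := by
        intro a b ha hb
        show wedge (a + b) c = 0
        rw [wedge_add]
        show wedge a c + wedge b c = 0
        rw [ha, hb, add_zero]
      zero_mem' := by
        show wedge (0 : Module.Dual k C) c = 0
        have : wedge (0 : Module.Dual k C) = 0 := by
          simpa using wedge_smul (0 : k) (0 : Module.Dual k C)
        rw [this]; rfl
      smul_mem' := by
        intro r x hx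
        show wedge (r • x) c = 0
        rw [smul_eq_mul, wedge_mul]
        show wedge r (wedge x c) = 0
        rw [show wedge x c = 0 from hx, map_zero] }
  have memA : ∀ f : Module.Dual k C, f ∈ A ↔ wedge f c = 0 := fun _ => Iff.rfl
  obtain ⟨H, hH⟩ := hD A
  have hset : ∀ r : Module.Dual k C, wedge r c = 0 ↔ ∀ h ∈ H, r * h = 0 := by
    intro r
    constructor
    · intro hr h hh
      have : r ∈ (A : Set (Module.Dual k C)) := hr
      rw [hH] at this
      exact this h hh
    · intro hr
      have : r ∈ {r : Module.Dual k C | ∀ h ∈ H, r * h = 0} := hr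
      rw [← hH] at this
      exact this
  -- all wedge-images of elements of H land inside N
  have claim1 : ∀ h ∈ H, ∀ x : C, wedge h x ∈ N := by
    intro h hh x
    by_contra hnot
    obtain ⟨g, hgN, hgx⟩ := exists_dual_sep hnot
    have hgA : wedge g c = 0 := hNkill g hgN
    have : g * h = 0 := (hset g).1 hgA h hh
    have h2 := mul_apply_eq_wedge g h x
    rw [this] at h2
    exact hgx (by simpa using h2.symm)
  have claim2 : ∀ h ∈ H, h ∈ Ifr k C := by
    intro h hh
    have hle : LinearMap.range (wedge h) ≤ N := by
      rintro _ ⟨x, rfl⟩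
      exact claim1 h hh x
    haveI := hNfd
    exact Submodule.finiteDimensional_of_le hle
  -- c lies in the sum of the ranges over H
  set Q : Submodule k C :=
    ⨆ (h : Module.Dual k C) (_ : h ∈ H), LinearMap.range (wedge h) with hQ
  have hcQ : c ∈ Q := by
    by_contra hnot
    obtain ⟨g₀, hg₀Q, hg₀c⟩ := exists_dual_sep hnot
    have hg₀A : ∀ h ∈ H, g₀ * h = 0 := by
      intro h hh
      ext x
      rw [mul_apply_eq_wedge]
      have : wedge h x ∈ Q := by
        have hle : LinearMap.range (wedge h) ≤ Q := by
          rw [hQ]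
          exact le_iSup₂ (f := fun (h : Module.Dual k C) (_ : h ∈ H) =>
            LinearMap.range (wedge h)) h hh
        exact hle (LinearMap.mem_range_self _ x)
      simpa using hg₀Q _ this
    have hwz : wedge g₀ c = 0 := (hset g₀).2 hg₀A
    have : g₀ c = 0 := by
      have := one_apply_wedge g₀ c
      rw [hwz] at this
      simpa using this.symm
    exact hg₀c this
  have hQle : Q ≤ covSup k C := by
    rw [hQ]
    apply iSup₂_le
    intro h hh
    exact le_iSup₂ (f := fun (h : Module.Dual k C) (_ : h ∈ Ifr k C) =>
      LinearMap.range (wedge h)) h (claim2 h hh)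
  exact hQle hcQ

private lemma nonstuck (hD : IsLeftDRing (Module.Dual k C)) (hinf : ¬ FiniteDimensional k C)
    (D W : Submodule k C) (hDfd : FiniteDimensional k D) (hWfd : FiniteDimensional k W) :
    ∃ (u : Module.Dual k C) (x : C),
      (∀ y ∈ (P0 k C ⊔ D : Submodule k C), u y = 0) ∧ wedge u x ∉ W := by
  by_contra hstuck
  push_neg at hstuck
  -- hstuck : ∀ u, ∀ x, (∀ y ∈ P0 ⊔ D, u y = 0) → wedge u x ∈ W
  apply hinf
  -- restriction-to-D map on duals
  haveI := hDfd
  haveI := hWfd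
  set L : Module.Dual k C →ₗ[k] Module.Dual k D := D.subtype.dualMap with hL
  set A : Submodule k (Module.Dual k C) := (P0 k C).dualAnnihilator with hA
  set S : Submodule k (Module.Dual k D) := A.map L with hS
  haveI : IsNoetherian k (Module.Dual k D) :=
    isNoetherian_of_isNoetherianRing_of_finite k (Module.Dual k D)
  obtain ⟨n, s, hspan⟩ :=
    Submodule.fg_iff_exists_fin_generating_family.1 (IsNoetherian.noetherian S)
  have hsS : ∀ i, s i ∈ S := by
    intro i
    rw [← hspan]
    exact Submodule.subset_span (Set.mem_range_self i)
  choose g hgA hgL using fun i => Submodule.mem_map.1 (hsS i)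
  -- g i kills P0, hence has finite rank
  have hgIfr : ∀ i, g i ∈ Ifr k C := by
    intro i
    apply mem_Ifr_of_kills_P0 hD
    exact fun p hp => (Submodule.mem_dualAnnihilator _).1 (hgA i) p hp
  -- the big finite-dimensional target
  set W' : Submodule k C :=
    W ⊔ ⨆ i : Fin n, LinearMap.range (wedge (g i)) with hW'
  haveI : ∀ i : Fin n, FiniteDimensional k (LinearMap.range (wedge (g i))) :=
    fun i => hgIfr i
  haveI : FiniteDimensional k W' := by
    rw [hW']
    infer_instance
  -- every finite-rank functional has range inside W'
  have hmain : ∀ h : Module.Dual k C, h ∈ Ifr k C → LinearMap.range (wedge h) ≤ W' := by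
    intro h hh
    have hhA : h ∈ A := (Submodule.mem_dualAnnihilator _).2 (Ifr_kills_P0 hh)
    have hLh : L h ∈ S := Submodule.mem_map_of_mem hhA
    rw [← hspan, Submodule.mem_span_range_iff_exists_fun] at hLh
    obtain ⟨cf, hcf⟩ := hLh
    set u : Module.Dual k C := h - ∑ i, cf i • g i with hu
    have huA : u ∈ A := by
      rw [hu]
      exact Submodule.sub_mem _ hhA
        (Submodule.sum_mem _ (fun i _ => Submodule.smul_mem _ _ (hgA i)))
    have huL : L u = 0 := by
      rw [hu, map_sub, map_sum]
      simp only [map_smul, hgL]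
      rw [hcf]
      exact sub_self _
    have hukills : ∀ y ∈ (P0 k C ⊔ D : Submodule k C), u y = 0 := by
      intro y hy
      obtain ⟨p, hp, d, hd, rfl⟩ := Submodule.mem_sup.1 hy
      have h1 : u p = 0 := (Submodule.mem_dualAnnihilator _).1 huA p hp
      have h2 : u d = 0 := by
        have := LinearMap.congr_fun huL ⟨d, hd⟩
        simpa [hL] using this
      rw [map_add, h1, h2, add_zero]
    have hrange_u : ∀ x : C, wedge u x ∈ W := fun x => hstuck u x hukills
    rintro _ ⟨x, rfl⟩
    have hdecomp : wedge h x = wedge u x + ∑ i, cf i • wedge (g i) x := by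
      have heq : h = u + ∑ i, cf i • g i := by rw [hu]; abel
      have h1 : wedgeL (k := k) (C := C) (∑ i, cf i • g i)
          = ∑ i, cf i • wedgeL (k := k) (C := C) (g i) := by
        rw [map_sum]
        simp only [map_smul]
      have h2 : wedge (∑ i, cf i • g i) = ∑ i, cf i • wedge (g i) := h1
      rw [heq, wedge_add]
      show wedge u x + wedge (∑ i, cf i • g i) x = _
      rw [h2]
      simp
    rw [hdecomp]
    apply Submodule.add_mem
    · exact Submodule.mem_sup_left (hrange_u x)
    · apply Submodule.sum_mem
      intro i _
      apply Submodule.smul_mem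
      apply Submodule.mem_sup_right
      have hle : LinearMap.range (wedge (g i)) ≤ ⨆ j : Fin n, LinearMap.range (wedge (g j)) :=
        le_iSup (fun j : Fin n => LinearMap.range (wedge (g j))) i
      exact hle (LinearMap.mem_range_self _ x)
  -- conclude C is finite dimensional
  have htop : (⊤ : Submodule k C) ≤ W' := by
    intro c _
    have hc := mem_covSup hD c
    have : covSup k C ≤ W' := by
      apply iSup₂_le
      intro h hh
      exact hmain h hh
    exact this hc
  have heqtop : (⊤ : Submodule k C) = W' := le_antisymm htop le_top
  haveI : FiniteDimensional k (⊤ : Submodule k C) := by rw [heqtop]; infer_instance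
  exact Submodule.topEquiv.finiteDimensional

private lemma chain_ext (Z : ℕ → Submodule k C) (hmono : Monotone Z)
    (g : ℕ → Module.Dual k C)
    (hcoh : ∀ n m : ℕ, n ≤ m → ∀ z ∈ Z n, g m z = g n z) :
    ∃ h' : Module.Dual k C, ∀ n, ∀ z ∈ Z n, h' z = g n z := by
  set Zo : ℕ →o Submodule k C := ⟨Z, hmono⟩ with hZo
  set Zs : Submodule k C := ⨆ n, Z n with hZs
  have key : ∀ z : Zs, ∃ n, (z : C) ∈ Z n := by
    intro z
    exact (Submodule.mem_iSup_of_chain Zo (z : C)).1 z.2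
  choose ix hix using key
  have agree : ∀ (n m : ℕ) (z : C), z ∈ Z n → z ∈ Z m → g n z = g m z := by
    intro n m z hn hm
    have h1 := hcoh n (max n m) (le_max_left n m) z hn
    have h2 := hcoh m (max n m) (le_max_right n m) z hm
    rw [← h1, ← h2]
  let φ : Zs →ₗ[k] k :=
    { toFun := fun z => g (ix z) z
      map_add' := by
        intro z w
        set N := max (ix (z + w)) (max (ix z) (ix w)) with hN
        have hz : (z : C) ∈ Z N :=
          hmono (le_trans (le_max_left _ _) (le_max_right _ _)) (hix z)
        have hw : (w : C) ∈ Z N :=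
          hmono (le_trans (le_max_right _ _) (le_max_right _ _)) (hix w)
        have hzw : ((z + w : Zs) : C) ∈ Z N := hmono (le_max_left _ _) (hix (z + w))
        show g (ix (z + w)) ((z + w : Zs) : C) = g (ix z) (z : C) + g (ix w) (w : C)
        rw [agree _ N _ (hix (z + w)) hzw, agree _ N _ (hix z) hz, agree _ N _ (hix w) hw]
        have hco : ((z + w : Zs) : C) = (z : C) + (w : C) := rfl
        rw [hco, map_add]
      map_smul' := by
        intro a z
        set N := max (ix (a • z)) (ix z) with hN
        have hz : (z : C) ∈ Z N := hmono (le_max_right _ _) (hix z)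
        have haz : ((a • z : Zs) : C) ∈ Z N := hmono (le_max_left _ _) (hix (a • z))
        show g (ix (a • z)) ((a • z : Zs) : C) = (RingHom.id k) a • g (ix z) (z : C)
        rw [agree _ N _ (hix (a • z)) haz, agree _ N _ (hix z) hz]
        have hco : ((a • z : Zs) : C) = a • (z : C) := rfl
        rw [hco, map_smul]
        rfl }
  obtain ⟨h', hh'⟩ := LinearMap.exists_extend φ
  refine ⟨h', ?_⟩
  intro n z hz
  have hzZs : z ∈ Zs := by
    rw [hZs]
    exact (le_iSup Z n) hz
  have happ := LinearMap.congr_fun hh' ⟨z, hzZs⟩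
  have : h' z = g (ix ⟨z, hzZs⟩) z := happ
  rw [this]
  exact agree _ n z (hix ⟨z, hzZs⟩) hz

/-- Greedy state. -/
structure GS (k : Type*) [Field k] (C : Type*) [AddCommGroup C] [Module k C]
    [Coalgebra k C] where
  D : Submodule k C
  W : Submodule k C
  fD : FiniteDimensional k D
  fW : FiniteDimensional k W

variable (k) in
noncomputable def NN (c : C) : Submodule k C := (exists_Npack (k := k) c).choose

private lemma NN_fd (c : C) : FiniteDimensional k (NN k c) :=
  (exists_Npack (k := k) c).choose_spec.1

private lemma NN_mem (c : C) : c ∈ NN k c :=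
  (exists_Npack (k := k) c).choose_spec.2.1

private lemma NN_kill (c : C) (θ : Module.Dual k C) (h : ∀ n ∈ NN k c, θ n = 0) :
    wedge θ c = 0 :=
  (exists_Npack (k := k) c).choose_spec.2.2 θ h

section Greedy

variable (hD : IsLeftDRing (Module.Dual k C)) (hinf : ¬ FiniteDimensional k C)

noncomputable def pickU (s : GS k C) : Module.Dual k C :=
  (nonstuck hD hinf s.D s.W s.fD s.fW).choose

noncomputable def pickX (s : GS k C) : C :=
  (nonstuck hD hinf s.D s.W s.fD s.fW).choose_spec.choose

private lemma pick_spec (s : GS k C) :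
    (∀ y ∈ (P0 k C ⊔ s.D : Submodule k C), pickU hD hinf s y = 0) ∧
      wedge (pickU hD hinf s) (pickX hD hinf s) ∉ s.W :=
  (nonstuck hD hinf s.D s.W s.fD s.fW).choose_spec.choose_spec

private lemma pickU_Ifr (s : GS k C) : pickU hD hinf s ∈ Ifr k C :=
  mem_Ifr_of_kills_P0 hD
    (fun p hp => (pick_spec hD hinf s).1 p (Submodule.mem_sup_left hp))

noncomputable def nextGS (s : GS k C) : GS k C where
  D := s.D ⊔ NN k (pickX hD hinf s)
  W := s.W ⊔ LinearMap.range (wedge (pickU hD hinf s))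
  fD := by
    haveI := s.fD
    haveI := NN_fd (k := k) (pickX hD hinf s)
    infer_instance
  fW := by
    haveI := s.fW
    haveI : FiniteDimensional k (LinearMap.range (wedge (pickU hD hinf s))) :=
      pickU_Ifr hD hinf s
    infer_instance

noncomputable def st : ℕ → GS k C
  | 0 => ⟨⊥, ⊥, by infer_instance, by infer_instance⟩
  | n + 1 => nextGS hD hinf (st n)

noncomputable def useq (n : ℕ) : Module.Dual k C := pickU hD hinf (st hD hinf n)

noncomputable def xseq (n : ℕ) : C := pickX hD hinf (st hD hinf n)

private lemma st_succ_D (n : ℕ) :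
    (st hD hinf (n + 1)).D = (st hD hinf n).D ⊔ NN k (xseq hD hinf n) := rfl

private lemma st_succ_W (n : ℕ) :
    (st hD hinf (n + 1)).W = (st hD hinf n).W ⊔ LinearMap.range (wedge (useq hD hinf n)) := rfl

private lemma Dmono : Monotone (fun n => (st hD hinf n).D) := by
  apply monotone_nat_of_le_succ
  intro n
  rw [st_succ_D]
  exact le_sup_left

private lemma Wmono : Monotone (fun n => (st hD hinf n).W) := by
  apply monotone_nat_of_le_succ
  intro n
  rw [st_succ_W]
  exact le_sup_left

private lemma NN_le_D {j n : ℕ} (h : j < n) :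
    NN k (xseq hD hinf j) ≤ (st hD hinf n).D := by
  have h1 : NN k (xseq hD hinf j) ≤ (st hD hinf (j + 1)).D := by
    rw [st_succ_D]
    exact le_sup_right
  exact h1.trans (Dmono hD hinf h)

private lemma range_le_W {j n : ℕ} (h : j < n) :
    LinearMap.range (wedge (useq hD hinf j)) ≤ (st hD hinf n).W := by
  have h1 : LinearMap.range (wedge (useq hD hinf j)) ≤ (st hD hinf (j + 1)).W := by
    rw [st_succ_W]
    exact le_sup_right
  exact h1.trans (Wmono hD hinf h)

private lemma useq_kills (n : ℕ) :
    ∀ y ∈ (P0 k C ⊔ (st hD hinf n).D : Submodule k C), useq hD hinf n y = 0 :=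
  (pick_spec hD hinf (st hD hinf n)).1

private lemma useq_wit (n : ℕ) :
    wedge (useq hD hinf n) (xseq hD hinf n) ∉ (st hD hinf n).W :=
  (pick_spec hD hinf (st hD hinf n)).2

noncomputable def gseq (n : ℕ) : Module.Dual k C :=
  ∑ j ∈ Finset.range (n + 1), useq hD hinf j

noncomputable def Zseq (n : ℕ) : Submodule k C := P0 k C ⊔ (st hD hinf (n + 1)).D

private lemma Zmono : Monotone (Zseq hD hinf) := by
  intro a b hab
  exact sup_le_sup (le_refl _) (Dmono hD hinf (Nat.succ_le_succ hab))

private lemma g_coh (n m : ℕ) (h : n ≤ m) :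
    ∀ z ∈ Zseq hD hinf n, gseq hD hinf m z = gseq hD hinf n z := by
  induction m, h using Nat.le_induction with
  | base => intro z _; rfl
  | succ m hnm ih =>
      intro z hz
      have hzz : z ∈ (P0 k C ⊔ (st hD hinf (m + 1)).D : Submodule k C) :=
        sup_le_sup (le_refl (P0 k C)) (Dmono hD hinf (Nat.succ_le_succ hnm)) hz
      have h0 : useq hD hinf (m + 1) z = 0 := useq_kills hD hinf (m + 1) z hzz
      have hsplit : gseq hD hinf (m + 1) = gseq hD hinf m + useq hD hinf (m + 1) := by
        unfold gseq
        rw [Finset.sum_range_succ]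
      rw [hsplit]
      show gseq hD hinf m z + useq hD hinf (m + 1) z = _
      rw [h0, add_zero, ih z hz]

end Greedy

end DRingProof

/-- If `C*` is a left D-ring then `C` is finite dimensional. -/
theorem statement4 {k : Type*} [Field k] {C : Type*} [AddCommGroup C] [Module k C]
    [Coalgebra k C] (hD : IsLeftDRing (Module.Dual k C)) :
    FiniteDimensional k C := by
  by_contra hinf
  obtain ⟨h', hh'⟩ := chain_ext (Zseq hD hinf) (Zmono hD hinf) (gseq hD hinf)
      (fun n m hnm z hz => g_coh hD hinf n m hnm z hz)
  have hkill : ∀ p ∈ P0 k C, h' p = 0 := by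
    intro p hp
    have hp0 : p ∈ Zseq hD hinf 0 := Submodule.mem_sup_left hp
    rw [hh' 0 p hp0]
    show (∑ j ∈ Finset.range 1, useq hD hinf j) p = 0
    rw [Finset.sum_range_one]
    exact useq_kills hD hinf 0 p (Submodule.mem_sup_left hp)
  have hIfr : h' ∈ Ifr k C := mem_Ifr_of_kills_P0 hD hkill
  haveI hfd : FiniteDimensional k (LinearMap.range (wedge h')) := hIfr
  set r := Module.finrank k (LinearMap.range (wedge h')) with hr
  set v : ℕ → C := fun j => wedge h' (xseq hD hinf j) with hv
  have hv_eq : ∀ j, v j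
      = ∑ l ∈ Finset.range (j + 1), wedge (useq hD hinf l) (xseq hD hinf j) := by
    intro j
    have hNle : NN k (xseq hD hinf j) ≤ Zseq hD hinf j :=
      le_trans (NN_le_D hD hinf (Nat.lt_succ_self j)) le_sup_right
    have hagree : ∀ nn ∈ NN k (xseq hD hinf j), (h' - gseq hD hinf j) nn = 0 := by
      intro nn hnn
      have hnn' := hh' j nn (hNle hnn)
      simp [LinearMap.sub_apply, hnn']
    have hwz := NN_kill (k := k) (xseq hD hinf j) _ hagree
    have hsubw : wedge (h' - gseq hD hinf j) = wedge h' - wedge (gseq hD hinf j) :=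
      map_sub (wedgeL (k := k) (C := C)) h' (gseq hD hinf j)
    rw [hsubw, LinearMap.sub_apply] at hwz
    have h1 : wedge h' (xseq hD hinf j) = wedge (gseq hD hinf j) (xseq hD hinf j) :=
      sub_eq_zero.1 hwz
    have h2 : wedge (gseq hD hinf j) = ∑ l ∈ Finset.range (j + 1), wedge (useq hD hinf l) :=
      map_sum (wedgeL (k := k) (C := C)) (fun l => useq hD hinf l) (Finset.range (j + 1))
    rw [hv]
    show wedge h' (xseq hD hinf j) = _
    rw [h1, h2]
    simp [LinearMap.sum_apply]
  have hv_notin : ∀ j, v j ∉ (st hD hinf j).W := by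
    intro j hmem
    apply useq_wit hD hinf j
    have hsplit : v j = (∑ l ∈ Finset.range j, wedge (useq hD hinf l) (xseq hD hinf j))
        + wedge (useq hD hinf j) (xseq hD hinf j) := by
      rw [hv_eq j, Finset.sum_range_succ]
    have hsum_mem : (∑ l ∈ Finset.range j, wedge (useq hD hinf l) (xseq hD hinf j))
        ∈ (st hD hinf j).W := by
      apply Submodule.sum_mem
      intro l hl
      exact range_le_W hD hinf (Finset.mem_range.1 hl) (LinearMap.mem_range_self _ _)
    have hrw : wedge (useq hD hinf j) (xseq hD hinf j)
        = v j - ∑ l ∈ Finset.range j, wedge (useq hD hinf l) (xseq hD hinf j) := by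
      rw [hsplit]
      abel
    rw [hrw]
    exact Submodule.sub_mem _ hmem hsum_mem
  have hv_in : ∀ l j, l < j → v l ∈ (st hD hinf j).W := by
    intro l j hlj
    rw [hv_eq l]
    apply Submodule.sum_mem
    intro i hi
    have hi' : i < l + 1 := Finset.mem_range.1 hi
    have hij : i < j := lt_of_lt_of_le hi' hlj
    exact range_le_W hD hinf hij (LinearMap.mem_range_self _ _)
  have hLI : ∀ n : ℕ, LinearIndependent k (fun i : Fin n => v i) := by
    intro n
    induction n with
    | zero => exact linearIndependent_empty_type
    | succ m ih =>
        have hsnoc : (fun i : Fin (m + 1) => v i)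
            = Fin.snoc (fun i : Fin m => v i) (v m) := by
          funext i
          refine Fin.lastCases ?_ ?_ i
          · simp [Fin.snoc]
          · intro i
            simp [Fin.snoc_castSucc]
        rw [hsnoc, linearIndependent_fin_snoc]
        refine ⟨ih, ?_⟩
        intro hmem
        apply hv_notin m
        have hle : Submodule.span k (Set.range (fun i : Fin m => v i)) ≤ (st hD hinf m).W := by
          rw [Submodule.span_le]
          rintro _ ⟨i, rfl⟩
          exact hv_in i m i.2
        exact hle hmem
  have hvr : ∀ j : ℕ, v j ∈ LinearMap.range (wedge h') := fun j =>
    LinearMap.mem_range_self _ _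
  set vv : Fin (r + 1) → LinearMap.range (wedge h') := fun i => ⟨v i, hvr i⟩ with hvv
  have hLIvv : LinearIndependent k vv := by
    apply LinearIndependent.of_comp (LinearMap.range (wedge h')).subtype
    have : ((LinearMap.range (wedge h')).subtype ∘ vv) = fun i : Fin (r + 1) => v i := rfl
    rw [this]
    exact hLI (r + 1)
  have hcard := hLIvv.fintype_card_le_finrank
  rw [Fintype.card_fin] at hcard
  omega

end Paper
end
end
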